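/- Adjointness of induction and restriction: for every Γ-invariant function f : V → ℂ (i.e. f(γ·v) = f(v) for all γ ∈ Γ, v ∈ V) and every function g : 𝔩 → ℂ, one has |Γ|^(−1) · Σ_{v ∈ V} f(v) · conj(Ind g (v)) = |Λ|^(−1) · Σ_{X ∈ 𝔩} Res f(X) · conj(g(X)). -/
import Mathlib


/-!
STATEMENT 7: Adjointness of induction and restriction.
-/

open scoped BigOperators

noncomputable section

namespace FiniteFourier

variable {F : Type*} [Field F] {V : Type*} [AddCommGroup V] [Module F V]
variable {Γ : Type*} [Group Γ] [MulAction Γ V]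

/-- Restriction `Res f : 𝔩 → ℂ`, `Res f(X) = |𝔲|⁻¹ · Σ_{N ∈ 𝔲} f(X + N)`. -/
def resV (𝔲 𝔩 : Submodule F V) (f : V → ℂ) : ↥𝔩 → ℂ := fun X =>
  ((Nat.card ↥𝔲 : ℂ))⁻¹ * ∑ᶠ N : ↥𝔲, f ((X : V) + (N : V))

open Classical in
/-- Induction `Ind g : V → ℂ`,
`Ind g(v) = |Λ|⁻¹ · |𝔲|⁻¹ · Σ_{γ ∈ Γ with γ·v ∈ 𝔭} g^∨(γ·v)` where `𝔭 = 𝔩 ⊕ 𝔲` and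
`g^∨(X + N) = g(X)` for `X ∈ 𝔩`, `N ∈ 𝔲`.  (The inner sums over `X ∈ 𝔩`, `N ∈ 𝔲`
implement `g^∨` via the unique decomposition of `γ·v` in `𝔭` when `𝔩 ∩ 𝔲 = 0`.) -/
def indV (Λ : Subgroup Γ) (𝔩 𝔲 : Submodule F V) (g : ↥𝔩 → ℂ) : V → ℂ := fun v =>
  (Nat.card ↥Λ : ℂ)⁻¹ * (Nat.card ↥𝔲 : ℂ)⁻¹ *
    ∑ᶠ γ : Γ, ∑ᶠ X : ↥𝔩, ∑ᶠ N : ↥𝔲,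
      if γ • v = (X : V) + (N : V) then g X else 0

/-- Adjointness of induction and restriction: for `Γ`-invariant `f : V → ℂ` and any
`g : 𝔩 → ℂ`,
`|Γ|⁻¹ · Σ_{v ∈ V} f(v) · conj(Ind g(v)) = |Λ|⁻¹ · Σ_{X ∈ 𝔩} Res f(X) · conj(g(X))`. -/
theorem ind_res_adjoint [Finite F] [Finite V] [Finite Γ]
    (hΓ_add : ∀ (γ : Γ) (x y : V), γ • (x + y) = γ • x + γ • y)
    (hΓ_smul : ∀ (γ : Γ) (c : F) (x : V), γ • (c • x) = c • (γ • x))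
    (Λ : Subgroup Γ)
    (𝔩 𝔲 : Submodule F V) (hdisj : 𝔩 ⊓ 𝔲 = ⊥)
    (f : V → ℂ) (hf : ∀ (γ : Γ) (v : V), f (γ • v) = f v)
    (g : ↥𝔩 → ℂ) :
    (Nat.card Γ : ℂ)⁻¹ * ∑ᶠ v : V, f v * (starRingEnd ℂ) (indV Λ 𝔩 𝔲 g v)
      = (Nat.card ↥Λ : ℂ)⁻¹ * ∑ᶠ X : ↥𝔩, resV 𝔲 𝔩 f X * (starRingEnd ℂ) (g X) := by
  classical
  cases nonempty_fintype V
  cases nonempty_fintype Γ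
  have hl : Fintype ↥𝔩 := Fintype.ofFinite _
  have hu : Fintype ↥𝔲 := Fintype.ofFinite _
  have hΓne : (Nat.card Γ : ℂ) ≠ 0 := by
    simp [Nat.card_eq_fintype_card, Fintype.card_ne_zero]
  simp only [indV, resV, finsum_eq_sum_of_fintype, map_mul, map_inv₀, map_natCast, map_sum,
    apply_ite (starRingEnd ℂ), map_zero]
  have key : ∑ v : V, ∑ γ : Γ, ∑ X : ↥𝔩, ∑ N : ↥𝔲,
      f v * (if γ • v = (X : V) + (N : V) then (starRingEnd ℂ) (g X) else 0)
      = (Nat.card Γ : ℂ) * ∑ X : ↥𝔩, ∑ N : ↥𝔲,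
          f ((X : V) + (N : V)) * (starRingEnd ℂ) (g X) := by
    rw [Finset.sum_comm]
    have step : ∀ γ : Γ, (∑ v : V, ∑ X : ↥𝔩, ∑ N : ↥𝔲,
        f v * (if γ • v = (X : V) + (N : V) then (starRingEnd ℂ) (g X) else 0))
        = ∑ X : ↥𝔩, ∑ N : ↥𝔲, f ((X : V) + (N : V)) * (starRingEnd ℂ) (g X) := by
      intro γ
      have := Equiv.sum_comp (MulAction.toPerm γ⁻¹)
        (fun v : V => ∑ X : ↥𝔩, ∑ N : ↥𝔲,
          f v * (if γ • v = (X : V) + (N : V) then (starRingEnd ℂ) (g X) else 0))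
      rw [← this]
      have : ∀ w : V, (∑ X : ↥𝔩, ∑ N : ↥𝔲,
          f (MulAction.toPerm γ⁻¹ w) *
            (if γ • (MulAction.toPerm γ⁻¹ w) = (X : V) + (N : V)
              then (starRingEnd ℂ) (g X) else 0))
          = ∑ X : ↥𝔩, ∑ N : ↥𝔲,
              f w * (if w = (X : V) + (N : V) then (starRingEnd ℂ) (g X) else 0) := by
        intro w
        simp [MulAction.toPerm, hf, smul_inv_smul]
      rw [Finset.sum_congr rfl fun w _ => this w]
      rw [Finset.sum_comm]
      refine Finset.sum_congr rfl fun X _ => ?_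
      rw [Finset.sum_comm]
      refine Finset.sum_congr rfl fun N _ => ?_
      simp only [mul_ite, mul_zero]
      simpa using Finset.sum_ite_eq' Finset.univ ((X : V) + (N : V))
        (fun w => f w * (starRingEnd ℂ) (g X))
    rw [Finset.sum_congr rfl fun γ _ => step γ, Finset.sum_const]
    simp [Nat.card_eq_fintype_card, nsmul_eq_mul]
  calc (Nat.card Γ : ℂ)⁻¹ * ∑ v : V, f v *
        ((Nat.card ↥Λ : ℂ)⁻¹ * (Nat.card ↥𝔲 : ℂ)⁻¹ *
          ∑ γ : Γ, ∑ X : ↥𝔩, ∑ N : ↥𝔲,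
            if γ • v = (X : V) + (N : V) then (starRingEnd ℂ) (g X) else 0)
      = (Nat.card Γ : ℂ)⁻¹ * ((Nat.card ↥Λ : ℂ)⁻¹ * (Nat.card ↥𝔲 : ℂ)⁻¹ *
          ∑ v : V, ∑ γ : Γ, ∑ X : ↥𝔩, ∑ N : ↥𝔲,
            f v * (if γ • v = (X : V) + (N : V) then (starRingEnd ℂ) (g X) else 0)) := by
        congr 1
        rw [Finset.mul_sum]
        refine Finset.sum_congr rfl fun v _ => ?_
        rw [mul_left_comm]
        congr 1
        simp only [Finset.mul_sum]
    _ = (Nat.card Γ : ℂ)⁻¹ * ((Nat.card ↥Λ : ℂ)⁻¹ * (Nat.card ↥𝔲 : ℂ)⁻¹ *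
          ((Nat.card Γ : ℂ) * ∑ X : ↥𝔩, ∑ N : ↥𝔲,
            f ((X : V) + (N : V)) * (starRingEnd ℂ) (g X))) := by rw [key]
    _ = (Nat.card ↥Λ : ℂ)⁻¹ * ∑ X : ↥𝔩,
          ((Nat.card ↥𝔲 : ℂ)⁻¹ * ∑ N : ↥𝔲, f ((X : V) + (N : V))) *
            (starRingEnd ℂ) (g X) := by
        have hS : ∑ X : ↥𝔩, ((Nat.card ↥𝔲 : ℂ)⁻¹ * ∑ N : ↥𝔲, f ((X : V) + (N : V))) *
              (starRingEnd ℂ) (g X)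
            = (Nat.card ↥𝔲 : ℂ)⁻¹ * ∑ X : ↥𝔩, ∑ N : ↥𝔲,
                f ((X : V) + (N : V)) * (starRingEnd ℂ) (g X) := by
          rw [Finset.mul_sum]
          refine Finset.sum_congr rfl fun X _ => ?_
          rw [mul_assoc, Finset.sum_mul]
        rw [hS]
        have hLne : (Nat.card ↥Λ : ℂ) ≠ 0 := by
          simp [Nat.card_eq_fintype_card, Fintype.card_ne_zero]
        have hUne : (Nat.card ↥𝔲 : ℂ) ≠ 0 := by
          simp [Nat.card_eq_fintype_card, Fintype.card_ne_zero]
        field_simp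

end FiniteFourier
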